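/- Let q ≥ 1 and 1 ≤ q′ ≤ q, let h₁,…,h_q : ℝⁿ → ℝ be continuously differentiable, and suppose each hᵢ with i ∈ {1,…,q′} is bounded above: hᵢ(x) < Mᵢ for all x ∈ ℝⁿ, with Mᵢ > 0. Let α₁,…,α_{q′} > 0, γ > 0, ρ ∈ [0,1), and let u : ℝⁿ → ℝᵐ be a continuous feedback such that for all x ∈ ℝⁿ: (i) ∑_{i=1}^{q′} αᵢ·(L_f hᵢ(x) + L_g hᵢ(x)·u(x)) + γ·sign( min{h₁(x),…,h_{q′}(x)} ) ≥ 0, and (ii) for every i ∈ {q′+1,…,q}, L_f hᵢ(x) + L_g hᵢ(x)·u(x) + γ·sign(hᵢ(x))·|hᵢ(x)|^ρ ≥ 0. Then for every closed-loop trajectory x(·), with arbitrary initial condition x₀ ∈ ℝⁿ, there exists a finite time T ≥ 0 such that hᵢ(x(T)) ≥ 0 for all i ∈ {1,…,q}, i.e. x(T) ∈ Γ = ⋂_{i=1}^{q} {x ∈ ℝⁿ : hᵢ(x) ≥ 0}. -/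

import Mathlib

/-- The sign function: 1 if positive, -1 if negative, 0 at 0. -/
noncomputable def sgn (z : ℝ) : ℝ := if 0 < z then 1 else if z < 0 then -1 else 0

/-- If `φ` has derivative `d` on `[a,b]` with `d ≥ c` on the interior, then
`φ a + c (b - a) ≤ φ b`. -/
private lemma grow_aux {φ d : ℝ → ℝ} {a b c : ℝ} (hab : a ≤ b)
    (hd : ∀ t ∈ Set.Icc a b, HasDerivAt φ (d t) t)
    (hc : ∀ t ∈ Set.Ioo a b, c ≤ d t) :
    φ a + c * (b - a) ≤ φ b := by
  have hder : ∀ t ∈ Set.Icc a b, HasDerivAt (fun s => φ s - c * s) (d t - c) t := by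
    intro t ht
    have h2 : HasDerivAt (fun s : ℝ => c * s) c t := by
      simpa using (hasDerivAt_id t).const_mul c
    exact (hd t ht).sub h2
  have hmono : MonotoneOn (fun t => φ t - c * t) (Set.Icc a b) := by
    apply monotoneOn_of_deriv_nonneg (convex_Icc a b)
    · exact fun t ht => (hder t ht).continuousAt.continuousWithinAt
    · rw [interior_Icc]
      exact fun t ht =>
        (hder t (Set.Ioo_subset_Icc_self ht)).differentiableAt.differentiableWithinAt
    · rw [interior_Icc]
      intro t ht
      rw [(hder t (Set.Ioo_subset_Icc_self ht)).deriv]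
      have := hc t ht
      linarith
  have h3 := hmono (Set.left_mem_Icc.2 hab) (Set.right_mem_Icc.2 hab) hab
  simp only at h3
  nlinarith

/-- Composite finite time control barrier functions (Theorem 1): given `q ≥ q' ≥ 1`
continuously differentiable barriers `h₁,…,h_q` with the first `q'` bounded above, weights
`αᵢ > 0`, `γ > 0`, `ρ ∈ [0,1)`, and a continuous feedback `u` satisfying the composite
constraint (i) and the individual constraints (ii), every closed-loop trajectory reaches
`Γ = ⋂ᵢ {x : hᵢ(x) ≥ 0}` at some finite time `T`. -/
theorem composite_fcbf_finite_time {n m q : ℕ} (q' : ℕ) (hq'1 : 1 ≤ q') (hq'q : q' ≤ q)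
    (h : Fin q → (Fin n → ℝ) → ℝ) (hC1 : ∀ i, ContDiff ℝ 1 (h i))
    (M : Fin q → ℝ) (hMpos : ∀ i : Fin q, (i : ℕ) < q' → 0 < M i)
    (hbdd : ∀ i : Fin q, (i : ℕ) < q' → ∀ x : Fin n → ℝ, h i x < M i)
    (f : (Fin n → ℝ) → (Fin n → ℝ))
    (g : (Fin n → ℝ) → (Fin n → Fin m → ℝ))
    (hf : LocallyLipschitz f) (hg : LocallyLipschitz g)
    (α : Fin q → ℝ) (hα : ∀ i : Fin q, (i : ℕ) < q' → 0 < α i)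
    (γ ρ : ℝ) (hγ : 0 < γ) (hρ0 : 0 ≤ ρ) (hρ1 : ρ < 1)
    (u : (Fin n → ℝ) → (Fin m → ℝ)) (hu : Continuous u)
    (hconstraint1 : ∀ x : Fin n → ℝ,
      (∑ i ∈ Finset.univ.filter (fun i : Fin q => (i : ℕ) < q'),
          α i * (fderiv ℝ (h i) x (f x)
            + fderiv ℝ (h i) x (fun r => ∑ j, g x r j * u x j)))
        + γ * sgn (⨅ i : {i : Fin q // (i : ℕ) < q'}, h i.1 x) ≥ 0)
    (hconstraint2 : ∀ x : Fin n → ℝ, ∀ i : Fin q, q' ≤ (i : ℕ) →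
      fderiv ℝ (h i) x (f x) + fderiv ℝ (h i) x (fun r => ∑ j, g x r j * u x j)
        + γ * sgn (h i x) * |h i x| ^ ρ ≥ 0)
    (x : ℝ → (Fin n → ℝ))
    (hx : ∀ t ≥ (0:ℝ),
      HasDerivAt x (f (x t) + fun r => ∑ j, g (x t) r j * u (x t) j) t) :
    ∃ T : ℝ, 0 ≤ T ∧ ∀ i : Fin q, 0 ≤ h i (x T) := by
  -- derivative of h i along the trajectory
  have hxc : ∀ (i : Fin q) (t : ℝ), 0 ≤ t →
      HasDerivAt (fun s => h i (x s))
        (fderiv ℝ (h i) (x t) (f (x t))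
          + fderiv ℝ (h i) (x t) (fun r => ∑ j, g (x t) r j * u (x t) j)) t := by
    intro i t ht
    have hdiff : DifferentiableAt ℝ (h i) (x t) :=
      ((hC1 i).differentiable one_ne_zero).differentiableAt
    have hcomp := hdiff.hasFDerivAt.comp_hasDerivAt t (hx t ht)
    have heq : (fderiv ℝ (h i) (x t))
          (f (x t) + fun r => ∑ j, g (x t) r j * u (x t) j)
        = fderiv ℝ (h i) (x t) (f (x t))
          + fderiv ℝ (h i) (x t) (fun r => ∑ j, g (x t) r j * u (x t) j) :=
      (fderiv ℝ (h i) (x t)).map_add _ _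
    rw [heq] at hcomp
    exact hcomp
  -- per-index finite-time reach and invariance for indices ≥ q'
  have claim1 : ∀ i : Fin q, ∃ Ti : ℝ, 0 ≤ Ti ∧
      (q' ≤ (i : ℕ) → ∀ t, Ti ≤ t → 0 ≤ h i (x t)) := by
    intro i
    by_cases hi : q' ≤ (i : ℕ)
    swap
    · exact ⟨0, le_rfl, fun hc => absurd hc hi⟩
    set φ : ℝ → ℝ := fun t => h i (x t) with hφ
    set d : ℝ → ℝ := fun t => fderiv ℝ (h i) (x t) (f (x t))
      + fderiv ℝ (h i) (x t) (fun r => ∑ j, g (x t) r j * u (x t) j) with hd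
    have hder : ∀ t, 0 ≤ t → HasDerivAt φ (d t) t := fun t ht => hxc i t ht
    have hdlow : ∀ t, φ t < 0 → γ * (-φ t) ^ ρ ≤ d t := by
      intro t hneg
      have h2 := hconstraint2 (x t) i hi
      have hs : sgn (h i (x t)) = -1 := by
        unfold sgn
        rw [if_neg (not_lt.2 hneg.le), if_pos hneg]
      have habs : |h i (x t)| = -φ t := abs_of_neg hneg
      rw [hs, habs] at h2
      have : d t + γ * -1 * (-φ t) ^ ρ ≥ 0 := h2
      linarith
    have hdnn : ∀ t, φ t < 0 → 0 ≤ d t := by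
      intro t hneg
      have h1 := hdlow t hneg
      have h2 : 0 ≤ γ * (-φ t) ^ ρ :=
        mul_nonneg hγ.le (Real.rpow_nonneg (by linarith) ρ)
      linarith
    -- invariance of `φ ≥ 0`
    have inv : ∀ a, 0 ≤ a → 0 ≤ φ a → ∀ b, a ≤ b → 0 ≤ φ b := by
      intro a ha hφa b hab
      by_contra hb
      push_neg at hb
      have hanb : a ≠ b := fun hEq => by rw [hEq] at hφa; linarith
      have hab' : a < b := lt_of_le_of_ne hab hanb
      set S : Set ℝ := Set.Icc a b ∩ φ ⁻¹' Set.Ici 0 with hS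
      have hSne : S.Nonempty := ⟨a, ⟨le_rfl, hab⟩, hφa⟩
      have hSbdd : BddAbove S := ⟨b, fun t ht => ht.1.2⟩
      have hφc : ContinuousOn φ (Set.Icc a b) := fun t ht =>
        (hder t (le_trans ha ht.1)).continuousAt.continuousWithinAt
      have hScl : IsClosed S :=
        hφc.preimage_isClosed_of_isClosed isClosed_Icc isClosed_Ici
      set s := sSup S with hs
      have hsS : s ∈ S := hScl.csSup_mem hSne hSbdd
      obtain ⟨⟨has, hsb⟩, hφs⟩ := hsS
      have hsb' : s < b := lt_of_le_of_ne hsb (fun hEq => by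
        rw [hEq] at hφs; exact absurd hφs (not_le.2 hb))
      have hnegIoo : ∀ t ∈ Set.Ioo s b, φ t < 0 := by
        intro t ⟨hst, htb⟩
        by_contra hnn
        push_neg at hnn
        have : t ∈ S := ⟨⟨le_trans has hst.le, htb.le⟩, hnn⟩
        exact absurd (le_csSup hSbdd this) (not_le.2 hst)
      have hkey := grow_aux (c := 0) hsb'.le
        (fun t ht => hder t (le_trans (le_trans ha has) ht.1))
        (fun t ht => hdnn t (hnegIoo t ht))
      simp only [zero_mul, add_zero] at hkey
      linarith [hφs.trans hkey]
    -- finite-time reach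
    by_cases h0 : 0 ≤ φ 0
    · exact ⟨0, le_rfl, fun _ t ht => inv 0 le_rfl h0 t ht⟩
    push_neg at h0
    have hreach : ∃ T, 0 ≤ T ∧ 0 ≤ φ T := by
      by_contra hcon
      push_neg at hcon
      set p : ℝ := 1 - ρ with hp
      have hppos : 0 < p := by simp [hp]; linarith
      set c : ℝ := γ * p with hcdef
      have hcpos : 0 < c := mul_pos hγ hppos
      set T : ℝ := (-φ 0) ^ p / c + 1 with hT
      have hT0 : (0:ℝ) ≤ T := by
        have hA : 0 ≤ (-φ 0) ^ p / c :=
          div_nonneg (Real.rpow_nonneg (by linarith : (0:ℝ) ≤ -φ 0) p) hcpos.le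
        rw [hT]
        linarith
      -- W t = -(-φ t)^p has derivative ≥ c on [0,T]
      have hWd : ∀ t ∈ Set.Icc (0:ℝ) T,
          HasDerivAt (fun s => -((-φ s) ^ p)) (d t * p * (-φ t) ^ (-ρ)) t := by
        intro t ht
        have hφt : φ t < 0 := hcon t ht.1
        have hne : -φ t ≠ 0 := by linarith
        have h1 : HasDerivAt (fun s => -φ s) (-d t) t := (hder t ht.1).neg
        have h2 := h1.rpow_const (p := p) (Or.inl hne)
        have h3 := h2.fun_neg
        refine h3.congr_deriv ?_
        rw [show p - 1 = -ρ by rw [hp]; ring]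
        ring
      have hWlow : ∀ t ∈ Set.Ioo (0:ℝ) T, c ≤ d t * p * (-φ t) ^ (-ρ) := by
        intro t ht
        have hφt : φ t < 0 := hcon t ht.1.le
        have hpos : (0:ℝ) < -φ t := by linarith
        have e1 : (-φ t) ^ ρ * (-φ t) ^ (-ρ) = 1 := by
          rw [← Real.rpow_add hpos]
          simp
        have e2 := hdlow t hφt
        have e3 : (0:ℝ) < (-φ t) ^ (-ρ) := Real.rpow_pos_of_pos hpos _
        have e4 : γ * ((-φ t) ^ ρ * (-φ t) ^ (-ρ)) ≤ d t * (-φ t) ^ (-ρ) := by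
          rw [← mul_assoc]
          exact mul_le_mul_of_nonneg_right e2 e3.le
        rw [e1, mul_one] at e4
        calc c = γ * p := hcdef
          _ ≤ (d t * (-φ t) ^ (-ρ)) * p := by
              exact mul_le_mul_of_nonneg_right e4 hppos.le
          _ = d t * p * (-φ t) ^ (-ρ) := by ring
      have hkey := grow_aux hT0 hWd hWlow
      have hend : -((-φ T) ^ p) ≤ 0 := by
        have := Real.rpow_nonneg (by linarith [hcon T hT0] : (0:ℝ) ≤ -φ T) p
        linarith
      have hcT : c * (T - 0) = (-φ 0) ^ p + c := by
        rw [hT]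
        field_simp
        ring
      rw [hcT] at hkey
      linarith
    obtain ⟨T0, hT00, hT0φ⟩ := hreach
    exact ⟨T0, hT00, fun _ t ht => inv T0 hT00 hT0φ t ht⟩
  -- choose a common settling time for indices ≥ q'
  choose Tf hTf0 hTf using claim1
  have hqpos : 0 < q := lt_of_lt_of_le hq'1 hq'q
  have hne : Finset.univ.Nonempty (α := Fin q) :=
    ⟨⟨0, hqpos⟩, Finset.mem_univ _⟩
  set T₂ : ℝ := Finset.univ.sup' hne Tf with hT₂
  have hT₂0 : 0 ≤ T₂ :=
    le_trans (hTf0 ⟨0, hqpos⟩) (Finset.le_sup' Tf (Finset.mem_univ _))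
  have hT₂i : ∀ i : Fin q, Tf i ≤ T₂ := fun i => Finset.le_sup' Tf (Finset.mem_univ i)
  -- main reaching argument for the first q' barriers
  have key : ∃ T, T₂ ≤ T ∧ 0 ≤ ⨅ i : {i : Fin q // (i : ℕ) < q'}, h i.1 (x T) := by
    by_contra hcon
    push_neg at hcon
    set V : ℝ → ℝ := fun t => ∑ i ∈ Finset.univ.filter (fun i : Fin q => (i : ℕ) < q'),
      α i * h i (x t) with hV
    have hVder : ∀ t, 0 ≤ t → HasDerivAt V
        (∑ i ∈ Finset.univ.filter (fun i : Fin q => (i : ℕ) < q'),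
          α i * (fderiv ℝ (h i) (x t) (f (x t))
            + fderiv ℝ (h i) (x t) (fun r => ∑ j, g (x t) r j * u (x t) j))) t := by
      intro t ht
      exact HasDerivAt.fun_sum fun i _ => (hxc i t ht).const_mul (α i)
    have hVlow : ∀ t, T₂ ≤ t →
        γ ≤ ∑ i ∈ Finset.univ.filter (fun i : Fin q => (i : ℕ) < q'),
          α i * (fderiv ℝ (h i) (x t) (f (x t))
            + fderiv ℝ (h i) (x t) (fun r => ∑ j, g (x t) r j * u (x t) j)) := by
      intro t ht
      have h1 := hconstraint1 (x t)
      have h2 := hcon t ht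
      have hs : sgn (⨅ i : {i : Fin q // (i : ℕ) < q'}, h i.1 (x t)) = -1 := by
        unfold sgn
        rw [if_neg (not_lt.2 h2.le), if_pos h2]
      rw [hs] at h1
      linarith
    set B : ℝ := ∑ i ∈ Finset.univ.filter (fun i : Fin q => (i : ℕ) < q'),
      α i * M i with hB
    have hVB : ∀ t, V t ≤ B := by
      intro t
      apply Finset.sum_le_sum
      intro i himem
      have hi : (i : ℕ) < q' := (Finset.mem_filter.1 himem).2
      exact mul_le_mul_of_nonneg_left (hbdd i hi (x t)).le (hα i hi).le
    set T : ℝ := T₂ + ((B - V T₂) / γ + 1) with hTdef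
    have hBV : 0 ≤ B - V T₂ := by linarith [hVB T₂]
    have hT₂T : T₂ ≤ T := by
      have := div_nonneg hBV hγ.le
      rw [hTdef]; linarith
    have hkey := grow_aux hT₂T
      (fun t htm => hVder t (le_trans hT₂0 htm.1))
      (fun t htm => hVlow t htm.1.le)
    have hcT : γ * (T - T₂) = (B - V T₂) + γ := by
      rw [hTdef]
      field_simp
      ring
    rw [hcT] at hkey
    linarith [hVB T]
  obtain ⟨T, hTT₂, hTinf⟩ := key
  refine ⟨T, le_trans hT₂0 hTT₂, fun i => ?_⟩
  by_cases hi : (i : ℕ) < q'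
  · have hle : (⨅ j : {j : Fin q // (j : ℕ) < q'}, h j.1 (x T)) ≤ h i (x T) :=
      ciInf_le (Set.Finite.bddBelow (Set.finite_range _)) (⟨i, hi⟩ : {j : Fin q // (j : ℕ) < q'})
    linarith
  · exact hTf i (le_of_not_gt hi) T (le_trans (hT₂i i) hTT₂)
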